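/- Let I = ∅ and let A_φ and A_ψ be nondeterministic Büchi word automata over Σ = 2^O, and let H ⊆ O. Then ⟨L(A_φ), L(A_ψ), H⟩ is realizable with privacy (by (∅/O)-transducers, which have a single input word and hence a single computation) if and only if L(A_φ) ∩ noise_H(L(A_ψ)) ∩ noise_H(Σ^ω ∖ L(A_ψ)) ≠ ∅, where noise_H(L) = ⋃_{w ∈ L} noise_H(w). Equivalently, if and only if there exists a word w ∈ L(A_φ) and words w⁺, w⁻ ∈ noise_H(w) with w⁺ ∈ L(A_ψ) and w⁻ ∉ L(A_ψ). -/

import Mathlib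

open Set

/-- Infinite words over alphabet `A`. -/
abbrev Word (A : Type) := ℕ → A

/-- `noiseW H w`: all words that agree with `w` on the visible signals `Hᶜ`. -/
def noiseW {A : Type} (H : Set A) (w : Word (Set A)) : Set (Word (Set A)) :=
  {w' | ∀ j, w' j ∩ Hᶜ = w j ∩ Hᶜ}

/-- A transducer with input alphabet `Ain` and output alphabet `Aout`. -/
structure Transd (Ain Aout : Type) where
  S : Type
  fintype_S : Fintype S
  s0 : S
  η : S → Ain → S
  τ : S → Aout

def Transd.stateAt {Ain Aout : Type} (T : Transd Ain Aout) (w : Word Ain) : ℕ → T.S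
  | 0 => T.η T.s0 (w 0)
  | n + 1 => T.η (T.stateAt w n) (w (n + 1))

def Transd.out {Ain Aout : Type} (T : Transd Ain Aout) (w : Word Ain) (j : ℕ) : Aout :=
  T.τ (T.stateAt w j)

/-- In the closed setting (`I = ∅`), the computation of a transducer consists of its
outputs only. -/
def closedComp {O : Type} (T : Transd (Set Empty) (Set O)) (wI : Word (Set Empty)) :
    Word (Set O) :=
  fun j => T.out wI j

/-- `⟨Lφ, Lψ, H⟩` is realizable with privacy by a closed (`(∅/O)`-) transducer. -/
def closedRealizableWithPrivacy {O : Type} (Lφ Lψ : Set (Word (Set O)))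
    (H : Set O) : Prop :=
  ∃ T : Transd (Set Empty) (Set O),
    (∀ wI, closedComp T wI ∈ Lφ) ∧
    (∀ wI, ∃ wp ∈ noiseW H (closedComp T wI), ∃ wm ∈ noiseW H (closedComp T wI),
      wp ∈ Lψ ∧ wm ∉ Lψ)

/-- A nondeterministic Büchi word automaton with alphabet `A` and state set `Q`. -/
structure NBW (A Q : Type) where
  q0 : Q
  δ : Q → A → Set Q
  α : Set Q

def NBW.IsRun {A Q : Type} (N : NBW A Q) (r : Word Q) (w : Word A) : Prop :=
  r 0 = N.q0 ∧ ∀ j, r (j + 1) ∈ N.δ (r j) (w j)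

/-- The set of states occurring infinitely often in `r`. -/
def infOcc {Q : Type} (r : Word Q) : Set Q := {q | ∀ N, ∃ n ≥ N, r n = q}

def NBW.lang {A Q : Type} (N : NBW A Q) : Set (Word A) :=
  {w | ∃ r, N.IsRun r w ∧ (infOcc r ∩ N.α).Nonempty}


lemma ramsey_consec {C : Type} [Finite C] (f : ℕ → ℕ → C) :
    ∃ g : ℕ → ℕ, StrictMono g ∧ ∃ c : C, ∀ i, f (g i) (g (i + 1)) = c := by
  classical
  -- one refinement step
  have step : ∀ S : Set ℕ, S.Infinite → ∃ x : ℕ × C × Set ℕ, x.1 ∈ S ∧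
      x.2.2.Infinite ∧ x.2.2 ⊆ S ∧ ∀ n ∈ x.2.2, x.1 < n ∧ f x.1 n = x.2.1 := by
    intro S hS
    obtain ⟨a, haS⟩ := hS.nonempty
    have hT : {n ∈ S | a < n}.Infinite := by
      have : S \ {n | n ≤ a} ⊆ {n ∈ S | a < n} := by
        intro n hn; exact ⟨hn.1, by simpa using hn.2⟩
      exact ((hS.diff (Set.finite_Iic a)).mono this)
    haveI : Infinite {n ∈ S | a < n} := hT.to_subtype
    obtain ⟨c, hc⟩ := Finite.exists_infinite_fiber (fun n : {n ∈ S | a < n} => f a n)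
    refine ⟨(a, c, {n ∈ S | a < n ∧ f a n = c}), haS, ?_, fun n hn => hn.1,
      fun n hn => hn.2⟩
    rw [Set.infinite_coe_iff] at hc
    have hss : Subtype.val '' ((fun n : {n ∈ S | a < n} => f a n) ⁻¹' {c})
        ⊆ {n ∈ S | a < n ∧ f a n = c} := by
      rintro m ⟨⟨x, hxS, hxa⟩, hx, rfl⟩
      exact ⟨hxS, hxa, hx⟩
    exact ((hc.image (fun x _ y _ h => Subtype.ext h)).mono hss)
  choose stp hmemS hinf hsub hspec using step
  let next : {S : Set ℕ // S.Infinite} → {S : Set ℕ // S.Infinite} :=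
    fun S => ⟨(stp S.1 S.2).2.2, hinf S.1 S.2⟩
  let chain : ℕ → {S : Set ℕ // S.Infinite} :=
    fun k => next^[k] ⟨Set.univ, Set.infinite_univ⟩
  have hchain : ∀ k, chain (k + 1) = next (chain k) := by
    intro k; simp only [chain, Function.iterate_succ_apply']
  let a : ℕ → ℕ := fun k => (stp (chain k).1 (chain k).2).1
  let c : ℕ → C := fun k => (stp (chain k).1 (chain k).2).2.1
  have hal : ∀ l, a l ∈ (chain l).1 := fun l => hmemS _ _
  have hsub' : ∀ k, (chain (k + 1)).1 ⊆ (chain k).1 := by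
    intro k; rw [hchain k]; exact hsub _ _
  have hmem : ∀ k l, k < l → ∀ n, n ∈ (chain l).1 → n ∈ (chain (k + 1)).1 := by
    intro k l hkl
    induction l with
    | zero => omega
    | succ l ih =>
      intro n hn
      rcases Nat.lt_succ_iff_lt_or_eq.mp hkl with h | h
      · exact ih h n (hsub' l hn)
      · subst h; exact hn
  have key : ∀ k l, k < l → a k < a l ∧ f (a k) (a l) = c k := by
    intro k l hkl
    have : a l ∈ (chain (k + 1)).1 := hmem k l hkl _ (hal l)
    rw [hchain k] at this
    exact hspec _ _ _ this
  have hamono : StrictMono a := strictMono_nat_of_lt_succ fun k => (key k (k+1) (by omega)).1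
  obtain ⟨col, hcol⟩ := Finite.exists_infinite_fiber c
  have hP : (setOf (fun k => c k = col)).Infinite := by
    rw [← Set.infinite_coe_iff]
    have : (c ⁻¹' {col}) = setOf (fun k => c k = col) := by ext k; simp; rfl
    rwa [this] at hcol
  refine ⟨fun i => a (Nat.nth (fun k => c k = col) i),
    hamono.comp (Nat.nth_strictMono hP), col, fun i => ?_⟩
  have hlt : Nat.nth (fun k => c k = col) i < Nat.nth (fun k => c k = col) (i + 1) :=
    Nat.nth_strictMono hP (by omega)
  rw [(key _ _ hlt).2]
  exact Nat.nth_mem_of_infinite hP i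

section UP

/-- State-index evolution of the lasso transducer: `0,1,...,m+p-1,m,m+1,...` -/
def upIdx (m p : ℕ) : ℕ → ℕ
  | 0 => 0
  | j + 1 => if upIdx m p j + 1 < m + p then upIdx m p j + 1 else m

lemma upIdx_inv (m p : ℕ) (hm : 1 ≤ m) (hp : 1 ≤ p) (j : ℕ) :
    upIdx m p j < m + p ∧ (j < m + p → upIdx m p j = j) ∧
      (m ≤ j → m ≤ upIdx m p j ∧ ∃ k, j = upIdx m p j + k * p) := by
  induction j with
  | zero =>
    simp only [upIdx]
    exact ⟨by omega, fun _ => trivial, fun h => absurd h (by omega)⟩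
  | succ j ih =>
    obtain ⟨h1, h2, h3⟩ := ih
    by_cases hlt : upIdx m p j + 1 < m + p
    · have e : upIdx m p (j + 1) = upIdx m p j + 1 := by
        rw [upIdx]; simp [hlt]
      rw [e]
      refine ⟨hlt, fun hj => ?_, fun hj => ?_⟩
      · rw [h2 (by omega)]
      · rcases Nat.lt_or_ge j m with hc | hc
        · -- j + 1 = m (since m ≤ j + 1 and j < m)
          have hjm : j + 1 = m := by omega
          have : upIdx m p j = j := h2 (by omega)
          refine ⟨by omega, 0, by omega⟩
        · obtain ⟨hge, k, hk⟩ := h3 hc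
          exact ⟨by omega, k, by omega⟩
    · have e : upIdx m p (j + 1) = m := by
        rw [upIdx]; simp [hlt]
      rw [e]
      have hu : upIdx m p j = m + p - 1 := by omega
      refine ⟨by omega, fun hj => ?_, fun _ => ⟨le_rfl, ?_⟩⟩
      · -- then j < m + p so upIdx j = j = m + p - 1, j + 1 = m + p, contradiction
        have := h2 (by omega)
        omega
      · rcases Nat.lt_or_ge j m with hc | hc
        · -- upIdx j = j < m, but upIdx j = m + p - 1 ≥ m
          have := h2 (by omega)
          omega
        · obtain ⟨hge, k, hk⟩ := h3 hc
          refine ⟨k + 1, ?_⟩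
          have hkp : (k + 1) * p = k * p + p := by ring
          omega

/-- The ultimately periodic reindexing. -/
def upRho (m p : ℕ) (n : ℕ) : ℕ := if n < m then n else m + (n - m) % p

lemma upRho_upIdx (m p : ℕ) (hm : 1 ≤ m) (hp : 1 ≤ p) (j : ℕ) :
    upRho m p (upIdx m p j) = upRho m p j := by
  obtain ⟨h1, h2, h3⟩ := upIdx_inv m p hm hp j
  rcases Nat.lt_or_ge j m with hc | hc
  · rw [h2 (by omega)]
  · obtain ⟨hge, k, hk⟩ := h3 hc
    unfold upRho
    rw [if_neg (by omega), if_neg (by omega)]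
    have e1 : (upIdx m p j - m) % p = upIdx m p j - m :=
      Nat.mod_eq_of_lt (by omega)
    have e2 : j - m = (upIdx m p j - m) + k * p := by omega
    rw [e1, e2, Nat.add_mul_mod_self_right, e1]

lemma upRho_lt (m p : ℕ) (hm : 1 ≤ m) (hp : 1 ≤ p) (n : ℕ) : upRho m p n < m + p := by
  unfold upRho
  split
  · omega
  · have := Nat.mod_lt (n - m) (y := p) (by omega)
    omega

lemma upRho_eq_self (m p : ℕ) (hm : 1 ≤ m) (hp : 1 ≤ p) (n : ℕ) (h : n < m + p) :
    upRho m p n = n := by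
  unfold upRho
  split
  · rfl
  · rw [Nat.mod_eq_of_lt (by omega)]; omega

lemma upRho_add (m p : ℕ) (hm : 1 ≤ m) (hp : 1 ≤ p) (k t : ℕ) (ht : t < p) :
    upRho m p (m + k * p + t) = m + t := by
  unfold upRho
  rw [if_neg (by omega)]
  have : m + k * p + t - m = t + k * p := by omega
  rw [this, Nat.add_mul_mod_self_right, Nat.mod_eq_of_lt ht]

end UP

section Prof
variable {A Q : Type}

/-- `r` is a valid path of `N` over `w` on the interval `[i, j]`. -/
def PathOn (N : NBW A Q) (w : Word A) (r : Word Q) (i j : ℕ) : Prop :=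
  ∀ t, i ≤ t → t + 1 ≤ j → r (t + 1) ∈ N.δ (r t) (w t)

/-- The transition profile of the segment `[i, j)` of `w`. -/
def prof (N : NBW A Q) (w : Word A) (i j : ℕ) : Set (Q × Q × Bool) :=
  {x | ∃ r : Word Q, r i = x.1 ∧ r j = x.2.1 ∧ PathOn N w r i j ∧
    (x.2.2 = true ↔ ∃ t, i ≤ t ∧ t ≤ j ∧ r t ∈ N.α)}

lemma prof_congr_sub (N : NBW A Q) (w w' : Word A) (i i' d : ℕ)
    (hw : ∀ t, t < d → w (i + t) = w' (i' + t)) :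
    prof N w i (i + d) ⊆ prof N w' i' (i' + d) := by
  rintro ⟨q, q', b⟩ ⟨r, hri, hrj, hpath, hacc⟩
  simp only at hri hrj hacc
  refine ⟨fun n => r (i + (n - i')), ?_, ?_, ?_, ?_⟩
  · show r (i + (i' - i')) = q
    simpa using hri
  · show r (i + (i' + d - i')) = q'
    have h : i' + d - i' = d := by omega
    rw [h]; exact hrj
  · intro t ht ht'
    show r (i + (t + 1 - i')) ∈ N.δ (r (i + (t - i'))) (w' t)
    have h1 : i + (t + 1 - i') = (i + (t - i')) + 1 := by omega
    have hwt := hw (t - i') (by omega)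
    have h3 : i' + (t - i') = t := by omega
    rw [h3] at hwt
    rw [h1, ← hwt]
    exact hpath (i + (t - i')) (by omega) (by omega)
  · show b = true ↔ ∃ t, i' ≤ t ∧ t ≤ i' + d ∧ r (i + (t - i')) ∈ N.α
    rw [hacc]
    constructor
    · rintro ⟨t, h1, h2, h3⟩
      refine ⟨i' + (t - i), by omega, by omega, ?_⟩
      rw [show i + (i' + (t - i) - i') = t by omega]
      exact h3
    · rintro ⟨t, h1, h2, h3⟩
      exact ⟨i + (t - i'), by omega, by omega, h3⟩

lemma prof_congr (N : NBW A Q) (w w' : Word A) (i i' d : ℕ)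
    (hw : ∀ t, t < d → w (i + t) = w' (i' + t)) :
    prof N w i (i + d) = prof N w' i' (i' + d) :=
  Set.Subset.antisymm (prof_congr_sub N w w' i i' d hw)
    (prof_congr_sub N w' w i' i d (fun t ht => (hw t ht).symm))

/-- If two words factor into segments with pairwise equal profiles, membership in the
language transfers. -/
lemma merge {Q : Type} [Finite Q] (N : NBW A Q) (x y : Word A) (σ τ : ℕ → ℕ)
    (hσ : StrictMono σ) (hτ : StrictMono τ) (hσ0 : σ 0 = 0) (hτ0 : τ 0 = 0)
    (hp : ∀ k, prof N x (σ k) (σ (k + 1)) = prof N y (τ k) (τ (k + 1))) :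
    x ∈ N.lang → y ∈ N.lang := by
  classical
  rintro ⟨r, ⟨hr0, hrstep⟩, q, hqinf, hqα⟩
  -- Boolean acceptance flags of the segments of x
  have hb : ∀ k, ∃ b : Bool,
      (b = true ↔ ∃ t, σ k ≤ t ∧ t ≤ σ (k + 1) ∧ r t ∈ N.α) := by
    intro k
    by_cases h : ∃ t, σ k ≤ t ∧ t ≤ σ (k + 1) ∧ r t ∈ N.α
    · exact ⟨true, by simp [h]⟩
    · exact ⟨false, by simp [h]⟩
  choose b hbspec using hb
  -- corresponding paths over y
  have hmem : ∀ k, ((r (σ k), r (σ (k + 1)), b k) : Q × Q × Bool) ∈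
      prof N y (τ k) (τ (k + 1)) := by
    intro k
    rw [← hp k]
    exact ⟨r, rfl, rfl, fun t _ _ => hrstep t, hbspec k⟩
  choose s hs1 hs2 hs3 hs4 using hmem
  -- block index
  let idx : ℕ → ℕ := fun n => Nat.findGreatest (fun k => τ k ≤ n) n
  have hidx1 : ∀ n, τ (idx n) ≤ n := by
    intro n
    exact Nat.findGreatest_spec (P := fun k => τ k ≤ n) (m := 0) (Nat.zero_le n)
      (by show τ 0 ≤ n; rw [hτ0]; exact Nat.zero_le n)
  have hidx2 : ∀ n, n < τ (idx n + 1) := by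
    intro n
    by_contra h
    push_neg at h
    have h1 : idx n + 1 ≤ n := le_trans (hτ.le_apply) h
    have := Nat.findGreatest_is_greatest (Nat.lt_succ_self (idx n)) h1
    exact this h
  have hidx_eq : ∀ k n, τ k ≤ n → n < τ (k + 1) → idx n = k := by
    intro k n h1 h2
    have hk : k ≤ idx n := Nat.le_findGreatest (le_trans hτ.le_apply h1) h1
    have : idx n ≤ k := by
      by_contra h
      push_neg at h
      have : τ (k + 1) ≤ τ (idx n) := hτ.monotone h
      have := hidx1 n
      omega
    omega
  -- the run over y
  set r' : Word Q := fun n => s (idx n) n with hr'def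
  have hbd : ∀ k, s k (τ (k + 1)) = s (k + 1) (τ (k + 1)) := by
    intro k
    rw [hs2 k, hs1 (k + 1)]
  have hr'at : ∀ k n, τ k ≤ n → n ≤ τ (k + 1) → r' n = s k n := by
    intro k n h1 h2
    rcases lt_or_eq_of_le h2 with h | h
    · rw [hr'def]; simp only; rw [hidx_eq k n h1 h]
    · subst h
      rw [hr'def]; simp only
      rw [hidx_eq (k + 1) (τ (k + 1)) le_rfl (hτ (by omega)), ← hbd k]
  have hrun : N.IsRun r' y := by
    constructor
    · have : r' 0 = s 0 0 := hr'at 0 0 (le_of_eq hτ0) (Nat.zero_le _)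
      rw [this]
      have := hs1 0
      rw [hτ0] at this
      rw [this, hσ0, hr0]
    · intro n
      set k := idx n with hk
      have h1 : τ k ≤ n := hidx1 n
      have h2 : n < τ (k + 1) := hidx2 n
      have e1 : r' n = s k n := hr'at k n h1 (le_of_lt h2)
      have e2 : r' (n + 1) = s k (n + 1) := hr'at k (n + 1) (by omega) (by omega)
      rw [e1, e2]
      exact hs3 k n h1 h2
  -- acceptance
  have hαinf : ∀ K, ∃ t ≥ K, r' t ∈ N.α := by
    intro K
    obtain ⟨n, hn, hrn⟩ := hqinf (σ K)
    -- block of n with respect to σ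
    set k := Nat.findGreatest (fun k => σ k ≤ n) n with hkdef
    have hk1 : σ k ≤ n :=
      Nat.findGreatest_spec (P := fun k => σ k ≤ n) (m := 0) (Nat.zero_le n)
        (by show σ 0 ≤ n; rw [hσ0]; exact Nat.zero_le n)
    have hk2 : n < σ (k + 1) := by
      by_contra h
      push_neg at h
      have h1 : k + 1 ≤ n := le_trans (hσ.le_apply) h
      exact Nat.findGreatest_is_greatest (Nat.lt_succ_self k) h1 h
    have hkK : K ≤ k := by
      by_contra h
      push_neg at h
      have : σ (k + 1) ≤ σ K := hσ.monotone h
      omega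
    have hbk : b k = true := (hbspec k).mpr ⟨n, hk1, le_of_lt hk2, hrn ▸ hqα⟩
    obtain ⟨t, ht1, ht2, ht3⟩ := (hs4 k).mp hbk
    refine ⟨t, ?_, ?_⟩
    · exact le_trans hkK (le_trans hτ.le_apply ht1)
    · rw [hr'at k t ht1 ht2]; exact ht3
  -- pigeonhole: some state of α recurs
  choose tt htt1 htt2 using hαinf
  obtain ⟨q', hq'⟩ := Finite.exists_infinite_fiber (fun K => r' (tt K))
  have hset : (setOf fun K => r' (tt K) = q').Infinite := by
    rw [← Set.infinite_coe_iff]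
    have : ((fun K => r' (tt K)) ⁻¹' {q'}) = setOf (fun K => r' (tt K) = q') := by
      ext k; simp; rfl
    rwa [this] at hq'
  obtain ⟨K0, hK0⟩ := hset.nonempty
  refine ⟨r', hrun, q', ?_, hK0 ▸ htt2 K0⟩
  intro M
  obtain ⟨K, hKmem, hKM⟩ := hset.exists_gt M
  exact ⟨tt K, le_trans (le_of_lt hKM) (htt1 K), hKmem⟩


section Main
variable {O Qφ Qψ : Type}

lemma lang_up_iff {A Q : Type} [Finite Q] (N : NBW A Q) (u : Word A) (g : ℕ → ℕ)
    (hg : StrictMono g)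
    (hconst : ∀ i, prof N u (g i) (g (i + 1)) = prof N u (g 1) (g 2)) :
    u ∈ N.lang ↔ (fun n => u (upRho (g 1) (g 2 - g 1) n)) ∈ N.lang := by
  set m := g 1 with hmdef
  set p := g 2 - g 1 with hpdef
  have hm : 1 ≤ m := by
    have := hg (show 0 < 1 by omega); omega
  have hp : 1 ≤ p := by
    have := hg (show 1 < 2 by omega); omega
  have hg2 : g 2 = m + p := by
    have := hg (show 1 < 2 by omega); omega
  set u' : Word A := fun n => u (upRho m p n) with hu'def
  set σ : ℕ → ℕ := fun k => match k with | 0 => 0 | k + 1 => g (k + 1) with hσdef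
  set τ : ℕ → ℕ := fun k => match k with | 0 => 0 | k + 1 => m + k * p with hτdef
  have hσm : StrictMono σ := by
    apply strictMono_nat_of_lt_succ
    intro k
    match k with
    | 0 => show 0 < g 1; omega
    | k + 1 => exact hg (by omega)
  have hτm : StrictMono τ := by
    apply strictMono_nat_of_lt_succ
    intro k
    match k with
    | 0 => show 0 < m + 0 * p; omega
    | k + 1 =>
      show m + k * p < m + (k + 1) * p
      have : (k + 1) * p = k * p + p := by ring
      omega
  have hmatch : ∀ k, prof N u (σ k) (σ (k + 1)) = prof N u' (τ k) (τ (k + 1)) := by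
    intro k
    match k with
    | 0 =>
      show prof N u 0 (g 1) = prof N u' 0 (m + 0 * p)
      have e1 : g 1 = 0 + m := by omega
      have e2 : m + 0 * p = 0 + m := by omega
      rw [e1, e2]
      apply prof_congr
      intro t ht
      show u (0 + t) = u (upRho m p (0 + t))
      rw [upRho_eq_self m p hm hp (0 + t) (by omega)]
    | k + 1 =>
      show prof N u (g (k + 1)) (g (k + 2)) = prof N u' (m + k * p) (m + (k + 1) * p)
      rw [hconst (k + 1)]
      have e1 : g 2 = m + p := hg2
      have e2 : (m + (k + 1) * p) = (m + k * p) + p := by ring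
      rw [e1, e2]
      apply prof_congr
      intro t ht
      show u (m + t) = u (upRho m p (m + k * p + t))
      rw [upRho_add m p hm hp k t ht]
  constructor
  · exact merge N u u' σ τ hσm hτm rfl rfl hmatch
  · exact merge N u' u τ σ hτm hσm rfl rfl (fun k => (hmatch k).symm)

/-- A finite transducer outputting the ultimately periodic word `u ∘ upRho m p`. -/
lemma exists_transducer_up {O : Type} (m p : ℕ) (hm : 1 ≤ m) (hp : 1 ≤ p)
    (u : Word (Set O)) :
    ∃ T : Transd (Set Empty) (Set O),
      ∀ wI j, closedComp T wI j = u (upRho m p j) := by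
  refine ⟨⟨Option (Fin (m + p)), inferInstance, none,
    fun s _ => some (match s with
      | none => ⟨0, by omega⟩
      | some t => if h : (t : ℕ) + 1 < m + p then ⟨(t : ℕ) + 1, h⟩ else ⟨m, by omega⟩),
    fun s => match s with
      | none => u 0
      | some t => u (upRho m p (t : ℕ))⟩, ?_⟩
  intro wI j
  set T : Transd (Set Empty) (Set O) := ⟨Option (Fin (m + p)), inferInstance, none,
    fun s _ => some (match s with
      | none => ⟨0, by omega⟩
      | some t => if h : (t : ℕ) + 1 < m + p then ⟨(t : ℕ) + 1, h⟩ else ⟨m, by omega⟩),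
    fun s => match s with
      | none => u 0
      | some t => u (upRho m p (t : ℕ))⟩ with hTdef
  have hstate : ∀ j, T.stateAt wI j =
      some ⟨upIdx m p j, (upIdx_inv m p hm hp j).1⟩ := by
    intro j
    induction j with
    | zero =>
      show T.η T.s0 (wI 0) = _
      rfl
    | succ j ih =>
      show T.η (T.stateAt wI j) (wI (j + 1)) = _
      rw [ih]
      show some _ = some _
      congr 1
      apply Fin.ext
      show (if h : upIdx m p j + 1 < m + p then (⟨upIdx m p j + 1, h⟩ : Fin (m + p))
        else ⟨m, by omega⟩ : Fin (m + p)).val = upIdx m p (j + 1)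
      rw [upIdx]
      split <;> simp_all
  show T.τ (T.stateAt wI j) = u (upRho m p j)
  rw [hstate j]
  show u (upRho m p (upIdx m p j)) = u (upRho m p j)
  rw [upRho_upIdx m p hm hp j]

lemma exists_transducer [Fintype Qφ] [Fintype Qψ]
    (Aφ : NBW (Set O) Qφ) (Aψ : NBW (Set O) Qψ) (H : Set O)
    (w wp wm : Word (Set O)) (hw : w ∈ Aφ.lang) (hpn : wp ∈ noiseW H w)
    (hmn : wm ∈ noiseW H w) (hpψ : wp ∈ Aψ.lang) (hmψ : wm ∉ Aψ.lang) :
    closedRealizableWithPrivacy Aφ.lang Aψ.lang H := by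
  classical
  obtain ⟨g, hg, c, hc⟩ := ramsey_consec
    (C := Set (Qφ × Qφ × Bool) × Set (Qψ × Qψ × Bool) × Set (Qψ × Qψ × Bool))
    (fun i j => (prof Aφ w i j, prof Aψ wp i j, prof Aψ wm i j))
  have hcφ : ∀ i, prof Aφ w (g i) (g (i + 1)) = prof Aφ w (g 1) (g 2) :=
    fun i => congrArg (fun x => x.1) ((hc i).trans (hc 1).symm)
  have hcp : ∀ i, prof Aψ wp (g i) (g (i + 1)) = prof Aψ wp (g 1) (g 2) :=
    fun i => congrArg (fun x => x.2.1) ((hc i).trans (hc 1).symm)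
  have hcm : ∀ i, prof Aψ wm (g i) (g (i + 1)) = prof Aψ wm (g 1) (g 2) :=
    fun i => congrArg (fun x => x.2.2) ((hc i).trans (hc 1).symm)
  set m := g 1 with hmdef
  set p := g 2 - g 1 with hpdef
  have hm : 1 ≤ m := by have := hg (show 0 < 1 by omega); omega
  have hp : 1 ≤ p := by have := hg (show 1 < 2 by omega); omega
  have hwlang : (fun n => w (upRho m p n)) ∈ Aφ.lang :=
    (lang_up_iff Aφ w g hg hcφ).mp hw
  have hplang : (fun n => wp (upRho m p n)) ∈ Aψ.lang :=
    (lang_up_iff Aψ wp g hg hcp).mp hpψ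
  have hmlang : (fun n => wm (upRho m p n)) ∉ Aψ.lang :=
    fun h => hmψ ((lang_up_iff Aψ wm g hg hcm).mpr h)
  obtain ⟨T, hT⟩ := exists_transducer_up m p hm hp w
  have hTeq : ∀ wI, closedComp T wI = fun n => w (upRho m p n) :=
    fun wI => funext (hT wI)
  refine ⟨T, fun wI => ?_, fun wI => ?_⟩
  · rw [hTeq wI]; exact hwlang
  · refine ⟨fun n => wp (upRho m p n), ?_, fun n => wm (upRho m p n), ?_,
      hplang, hmlang⟩
    · intro j
      rw [hTeq wI]
      exact hpn (upRho m p j)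
    · intro j
      rw [hTeq wI]
      exact hmn (upRho m p j)

lemma noise_symm {O : Type} {H : Set O} {w w' : Word (Set O)}
    (h : w' ∈ noiseW H w) : w ∈ noiseW H w' := fun j => (h j).symm

end Main

/-- in the closed setting, realizability with privacy reduces to the
nonemptiness of `L(Aφ) ∩ noise_H(L(Aψ)) ∩ noise_H(Σ^ω ∖ L(Aψ))`. -/
theorem closed_privacy_iff_nonempty {O Qφ Qψ : Type} [Fintype O] [Fintype Qφ]
    [Fintype Qψ] (Aφ : NBW (Set O) Qφ) (Aψ : NBW (Set O) Qψ) (H : Set O) :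
    (closedRealizableWithPrivacy Aφ.lang Aψ.lang H ↔
      (Aφ.lang ∩ (⋃ w ∈ Aψ.lang, noiseW H w) ∩
        (⋃ w ∈ (Aψ.lang)ᶜ, noiseW H w)).Nonempty) ∧
    (closedRealizableWithPrivacy Aφ.lang Aψ.lang H ↔
      ∃ w ∈ Aφ.lang, ∃ wp ∈ noiseW H w, ∃ wm ∈ noiseW H w,
        wp ∈ Aψ.lang ∧ wm ∉ Aψ.lang) := by
  have hiff2 : closedRealizableWithPrivacy Aφ.lang Aψ.lang H ↔
      ∃ w ∈ Aφ.lang, ∃ wp ∈ noiseW H w, ∃ wm ∈ noiseW H w,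
        wp ∈ Aψ.lang ∧ wm ∉ Aψ.lang := by
    constructor
    · rintro ⟨T, h1, h2⟩
      obtain ⟨wp, hwp, wm, hwm, hpψ, hmψ⟩ := h2 (fun _ => ∅)
      exact ⟨closedComp T (fun _ => ∅), h1 _, wp, hwp, wm, hwm, hpψ, hmψ⟩
    · rintro ⟨w, hw, wp, hwp, wm, hwm, hpψ, hmψ⟩
      exact exists_transducer Aφ Aψ H w wp wm hw hwp hwm hpψ hmψ
  refine ⟨?_, hiff2⟩
  rw [hiff2]
  constructor
  · rintro ⟨w, hw, wp, hwp, wm, hwm, hpψ, hmψ⟩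
    refine ⟨w, ⟨⟨hw, ?_⟩, ?_⟩⟩
    · exact Set.mem_biUnion hpψ (noise_symm hwp)
    · exact Set.mem_biUnion (show wm ∈ (Aψ.lang)ᶜ from hmψ) (noise_symm hwm)
  · rintro ⟨w, ⟨⟨hw, hU1⟩, hU2⟩⟩
    simp only [Set.mem_iUnion] at hU1 hU2
    obtain ⟨wp, hpψ, hwp⟩ := hU1
    obtain ⟨wm, hmψ, hwm⟩ := hU2
    exact ⟨w, hw, wp, noise_symm hwp, wm, noise_symm hwm, hpψ, hmψ⟩
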